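/- Let a, b, c, d, e ∈ ℝ and let (u, v) ∈ ℝ² with (u, v) ≠ (0, 0). Then there are at most 4 points (x, y) ∈ ℝ² such that both (x, y) and (x+u, y+v) lie on the curve y² + a·x·y + b·y = x³ + c·x² + d·x + e. (A fixed nonzero difference vector connects at most 4 pairs of points on a real Weierstrass cubic.) -/
import Mathlib

open Polynomial

/-- If a set is contained in a finset of cardinality at most 4, it is finite
with `ncard` at most 4. -/
lemma subset_finset_card_le {S : Set (ℝ × ℝ)} (F : Finset (ℝ × ℝ))
    (h : S ⊆ ↑F) (hc : F.card ≤ 4) : S.Finite ∧ S.ncard ≤ 4 := by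
  refine ⟨Set.Finite.subset F.finite_toSet h, ?_⟩
  calc S.ncard ≤ (↑F : Set (ℝ × ℝ)).ncard :=
        Set.ncard_le_ncard h F.finite_toSet
    _ = F.card := Set.ncard_coe_finset F
    _ ≤ 4 := hc

/-- A fixed nonzero difference vector connects at most 4 pairs of points on a
real Weierstrass cubic. -/
theorem weierstrass_difference_vector_real
    (a b c d e u v : ℝ) (huv : (u, v) ≠ (0, 0)) :
    {p : ℝ × ℝ |
        p.2 ^ 2 + a * p.1 * p.2 + b * p.2 =
          p.1 ^ 3 + c * p.1 ^ 2 + d * p.1 + e ∧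
        (p.2 + v) ^ 2 + a * (p.1 + u) * (p.2 + v) + b * (p.2 + v) =
          (p.1 + u) ^ 3 + c * (p.1 + u) ^ 2 + d * (p.1 + u) + e}.Finite ∧
    {p : ℝ × ℝ |
        p.2 ^ 2 + a * p.1 * p.2 + b * p.2 =
          p.1 ^ 3 + c * p.1 ^ 2 + d * p.1 + e ∧
        (p.2 + v) ^ 2 + a * (p.1 + u) * (p.2 + v) + b * (p.2 + v) =
          (p.1 + u) ^ 3 + c * (p.1 + u) ^ 2 + d * (p.1 + u) + e}.ncard ≤ 4 := by
  set A : ℝ := 2 * v + a * u with hA_def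
  set m2 : ℝ := 3 * u ^ 2 + 2 * c * u - a * v with hm2_def
  set k2 : ℝ := u ^ 3 + c * u ^ 2 + d * u - v ^ 2 - a * u * v - b * v with hk2_def
  -- from the two curve equations: A * y = 3u x^2 + m2 x + k2
  have key : ∀ p : ℝ × ℝ,
      p.2 ^ 2 + a * p.1 * p.2 + b * p.2 =
          p.1 ^ 3 + c * p.1 ^ 2 + d * p.1 + e →
      (p.2 + v) ^ 2 + a * (p.1 + u) * (p.2 + v) + b * (p.2 + v) =
          (p.1 + u) ^ 3 + c * (p.1 + u) ^ 2 + d * (p.1 + u) + e →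
      A * p.2 = 3 * u * p.1 ^ 2 + m2 * p.1 + k2 := by
    intro p h1 h2
    rw [hA_def, hm2_def, hk2_def]
    linear_combination h2 - h1
  by_cases hA : A = 0
  · -- then u ≠ 0 and x satisfies a genuine quadratic; y a monic quadratic.
    have hu : u ≠ 0 := by
      intro h
      apply huv
      have hv : v = 0 := by
        have : A = 2 * v := by rw [hA_def, h]; ring
        rw [hA] at this; linarith
      rw [h, hv]
    set R : ℝ[X] := C (3 * u) * X ^ 2 + C m2 * X + C k2 with hR_def
    have hRc : R.coeff 2 = 3 * u := by
      rw [hR_def]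
      simp only [coeff_add, coeff_C_mul, coeff_X_pow, coeff_X, coeff_C]
      norm_num
    have hRne : R ≠ 0 := by
      intro h
      rw [h, coeff_zero] at hRc
      exact hu (by linarith)
    have hRdeg : R.natDegree ≤ 2 := by rw [hR_def]; compute_degree
    set T : ℝ → ℝ[X] := fun x =>
      X ^ 2 + C (a * x + b) * X + C (-(x ^ 3 + c * x ^ 2 + d * x + e)) with hT_def
    have hTc : ∀ x, (T x).coeff 2 = 1 := by
      intro x
      simp only [hT_def, coeff_add, coeff_C_mul, coeff_X_pow, coeff_X, coeff_C]
      norm_num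
    have hTne : ∀ x, T x ≠ 0 := by
      intro x h
      have := hTc x
      rw [h, coeff_zero] at this
      norm_num at this
    have hTdeg : ∀ x, (T x).natDegree ≤ 2 := by
      intro x; simp only [hT_def]; compute_degree
    refine subset_finset_card_le
      (R.roots.toFinset.biUnion fun x =>
        (T x).roots.toFinset.image fun y => (x, y)) ?_ ?_
    · rintro p ⟨h1, h2⟩
      have hkey := key p h1 h2
      rw [hA, zero_mul] at hkey
      simp only [Finset.coe_biUnion, Set.mem_iUnion, Finset.mem_coe,
        Multiset.mem_toFinset, Finset.coe_image, Set.mem_image]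
      refine ⟨p.1, ?_, p.2, ?_, rfl⟩
      · rw [mem_roots hRne, hR_def]
        simp only [IsRoot, eval_add, eval_mul, eval_pow, eval_C, eval_X]
        linear_combination -hkey
      · rw [mem_roots (hTne p.1)]
        simp only [hT_def, IsRoot, eval_add, eval_mul, eval_pow, eval_C, eval_X]
        linear_combination h1
    · calc (R.roots.toFinset.biUnion fun x =>
            (T x).roots.toFinset.image fun y => (x, y)).card
          ≤ ∑ x ∈ R.roots.toFinset,
              ((T x).roots.toFinset.image fun y => (x, y)).card :=
            Finset.card_biUnion_le
        _ ≤ ∑ x ∈ R.roots.toFinset, 2 := by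
            apply Finset.sum_le_sum
            intro x _
            calc ((T x).roots.toFinset.image fun y => (x, y)).card
                ≤ (T x).roots.toFinset.card := Finset.card_image_le
              _ ≤ Multiset.card (T x).roots := Multiset.toFinset_card_le _
              _ ≤ (T x).natDegree := card_roots' _
              _ ≤ 2 := hTdeg x
        _ = R.roots.toFinset.card * 2 := by
            rw [Finset.sum_const, smul_eq_mul]
        _ ≤ 2 * 2 := by
            have h2 : R.roots.toFinset.card ≤ 2 := by
              calc R.roots.toFinset.card ≤ Multiset.card R.roots :=
                    Multiset.toFinset_card_le _
                _ ≤ R.natDegree := card_roots' _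
                _ ≤ 2 := hRdeg
            omega
        _ = 4 := by norm_num
  · -- A ≠ 0: y is a quadratic function of x; substitute into the curve.
    set q2 : ℝ := 3 * u / A with hq2_def
    set q1 : ℝ := m2 / A with hq1_def
    set q0 : ℝ := k2 / A with hq0_def
    set P : ℝ[X] := C (q2 ^ 2) * X ^ 4 + C (2 * q2 * q1 + a * q2 - 1) * X ^ 3 +
      C (q1 ^ 2 + 2 * q2 * q0 + a * q1 + b * q2 - c) * X ^ 2 +
      C (2 * q1 * q0 + a * q0 + b * q1 - d) * X + C (q0 ^ 2 + b * q0 - e)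
      with hP_def
    have hPc4 : P.coeff 4 = q2 ^ 2 := by
      rw [hP_def]
      simp only [coeff_add, coeff_C_mul, coeff_X_pow, coeff_X, coeff_C]
      norm_num
    have hPc3 : P.coeff 3 = 2 * q2 * q1 + a * q2 - 1 := by
      rw [hP_def]
      simp only [coeff_add, coeff_C_mul, coeff_X_pow, coeff_X, coeff_C]
      norm_num
    have hPne : P ≠ 0 := by
      intro h
      rw [h, coeff_zero] at hPc4 hPc3
      by_cases hu : u = 0
      · have hq2z : q2 = 0 := by rw [hq2_def, hu]; simp
        rw [hq2z] at hPc3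
        norm_num at hPc3
      · have hq2z : q2 = 0 := by
          have := hPc4.symm
          exact pow_eq_zero_iff (two_ne_zero) |>.mp this
        rw [hq2_def] at hq2z
        rcases div_eq_zero_iff.mp hq2z with h3u | hAz
        · exact hu (by linarith)
        · exact hA hAz
    have hPdeg : P.natDegree ≤ 4 := by rw [hP_def]; compute_degree
    refine subset_finset_card_le
      (P.roots.toFinset.image fun x => (x, q2 * x ^ 2 + q1 * x + q0)) ?_ ?_
    · rintro p ⟨h1, h2⟩
      have hkey := key p h1 h2
      have hy : p.2 = q2 * p.1 ^ 2 + q1 * p.1 + q0 := by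
        rw [hq2_def, hq1_def, hq0_def]
        field_simp
        linear_combination hkey
      simp only [Finset.coe_image, Set.mem_image, Finset.mem_coe,
        Multiset.mem_toFinset]
      refine ⟨p.1, ?_, ?_⟩
      · rw [mem_roots hPne, hP_def]
        simp only [IsRoot, eval_add, eval_mul, eval_pow, eval_C, eval_X]
        linear_combination h1 -
          (p.2 + (q2 * p.1 ^ 2 + q1 * p.1 + q0) + a * p.1 + b) * hy
      · rw [← hy]
    · calc (P.roots.toFinset.image fun x => (x, q2 * x ^ 2 + q1 * x + q0)).card
          ≤ P.roots.toFinset.card := Finset.card_image_le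
        _ ≤ Multiset.card P.roots := Multiset.toFinset_card_le _
        _ ≤ P.natDegree := card_roots' _
        _ ≤ 4 := hPdeg
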